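/- Let s : ℝ → ℝ ∪ {-∞} have domain a closed bounded interval [a,b], be continuous on [a,b], and be twice continuously differentiable on (a,b). Fix u ∈ (a,b) and suppose λ ≥ 0 is such that the set D = {v ∈ [a,b] : s(v) ≥ s(u) + s'(u)(v-u) + λ(v-u)²} is bounded. Then there exists γ₀ ≥ 0 such that for every γ > γ₀, s has a strictly supporting parabola at u with parameters (s'(u), γ): s(v) < s(u) + s'(u)(v-u) + γ(v-u)² for all v ∈ [a,b], v ≠ u. -/

import Mathlib

/-- Local version: if `s` is continuous on `[a,b]`, twice continuously differentiable
on `(a,b)`, `u ∈ (a,b)`, and for some `λ ≥ 0` the set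
`D = {v ∈ [a,b] : s(v) ≥ s(u) + s'(u)(v-u) + λ(v-u)²}` is bounded, then there exists
`γ₀ ≥ 0` such that for all `γ > γ₀`, `s` has a strictly supporting parabola at `u`
with parameters `(s'(u), γ)`. -/
theorem stmt15 (a b : ℝ) (hab : a < b) (s s' s'' : ℝ → ℝ)
    (hcont : ContinuousOn s (Set.Icc a b))
    (hd1 : ∀ v ∈ Set.Ioo a b, HasDerivAt s (s' v) v)
    (hd2 : ∀ v ∈ Set.Ioo a b, HasDerivAt s' (s'' v) v)
    (hc2 : ContinuousOn s'' (Set.Ioo a b))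
    (u : ℝ) (hu : u ∈ Set.Ioo a b) (lam : ℝ) (hlam : 0 ≤ lam)
    (hDbdd : Bornology.IsBounded
      {v ∈ Set.Icc a b | s u + s' u * (v - u) + lam * (v - u) ^ 2 ≤ s v}) :
    ∃ γ₀ : ℝ, 0 ≤ γ₀ ∧ ∀ γ : ℝ, γ₀ < γ → ∀ v ∈ Set.Icc a b, v ≠ u →
      s v < s u + s' u * (v - u) + γ * (v - u) ^ 2 := by
  obtain ⟨hau, hub⟩ := hu
  set δ : ℝ := min (u - a) (b - u) / 2 with hδdef
  have hδpos : 0 < δ := by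
    have : 0 < min (u - a) (b - u) := lt_min (by linarith) (by linarith)
    positivity
  have hδa : a < u - δ := by
    have h1 : δ ≤ (u - a) / 2 := by
      apply div_le_div_of_nonneg_right (min_le_left _ _) (by norm_num) |>.trans_eq rfl
    linarith
  have hδb : u + δ < b := by
    have h1 : δ ≤ (b - u) / 2 := by
      apply div_le_div_of_nonneg_right (min_le_right _ _) (by norm_num) |>.trans_eq rfl
    linarith
  have hsub : Set.Icc (u - δ) (u + δ) ⊆ Set.Ioo a b := fun x hx =>
    ⟨lt_of_lt_of_le hδa hx.1, lt_of_le_of_lt hx.2 hδb⟩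
  -- bound on s'' near u
  obtain ⟨M, hM⟩ := (isCompact_Icc (a := u - δ) (b := u + δ)).exists_bound_of_continuousOn
    (hc2.mono hsub)
  have hM0 : 0 ≤ M := le_trans (norm_nonneg _) (hM u ⟨by linarith, by linarith⟩)
  -- Taylor-type bound near u
  have hnear : ∀ v ∈ Set.Icc (u - δ) (u + δ),
      s v - s u - s' u * (v - u) ≤ M * (v - u) ^ 2 := by
    intro v hv
    have huI : u ∈ Set.Icc (u - δ) (u + δ) := ⟨by linarith, by linarith⟩
    set J : Set ℝ := Set.uIcc u v with hJ
    have hJsub : J ⊆ Set.Icc (u - δ) (u + δ) := Set.uIcc_subset_Icc huI hv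
    have hJIoo : J ⊆ Set.Ioo a b := hJsub.trans hsub
    have hconvJ : Convex ℝ J := convex_uIcc u v
    -- Lipschitz bound on s'
    have hlip : ∀ x ∈ J, |s' x - s' u| ≤ M * |v - u| := by
      intro x hx
      have h1 : ‖s' x - s' u‖ ≤ M * ‖x - u‖ :=
        hconvJ.norm_image_sub_le_of_norm_hasDerivWithin_le
          (fun y hy => (hd2 y (hJIoo hy)).hasDerivWithinAt)
          (fun y hy => hM y (hJsub hy)) Set.left_mem_uIcc hx
      have h2 : |x - u| ≤ |v - u| := Set.abs_sub_left_of_mem_uIcc hx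
      calc |s' x - s' u| ≤ M * |x - u| := h1
        _ ≤ M * |v - u| := by nlinarith [abs_nonneg (x - u)]
    have hg : ∀ x ∈ J, HasDerivWithinAt (fun y => s y - s' u * y) (s' x - s' u) J x := by
      intro x hx
      have h := ((hd1 x (hJIoo hx)).sub ((hasDerivAt_id x).const_mul (s' u))).hasDerivWithinAt (s := J)
      have h' : HasDerivWithinAt (s - fun y => s' u * y) (s' x - s' u) J x := by simpa using h
      exact h'
    have h3 : ‖(s v - s' u * v) - (s u - s' u * u)‖ ≤ (M * |v - u|) * ‖v - u‖ :=
      hconvJ.norm_image_sub_le_of_norm_hasDerivWithin_le hg hlip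
        Set.left_mem_uIcc Set.right_mem_uIcc
    have h4 : |(s v - s' u * v) - (s u - s' u * u)| ≤ M * (v - u) ^ 2 := by
      calc |(s v - s' u * v) - (s u - s' u * u)| ≤ (M * |v - u|) * |v - u| := h3
        _ = M * (v - u) ^ 2 := by rw [mul_assoc, ← abs_mul, ← sq, abs_sq]
    have := (abs_le.mp h4).2
    nlinarith
  -- global bound away from u
  obtain ⟨C, hC⟩ := (isCompact_Icc (a := a) (b := b)).exists_bound_of_continuousOn hcont
  set B : ℝ := C + C + |s' u| * (b - a) with hB
  have hC0 : 0 ≤ C := le_trans (norm_nonneg _) (hC u ⟨le_of_lt hau, le_of_lt hub⟩)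
  have hB0 : 0 ≤ B := by
    have := abs_nonneg (s' u)
    nlinarith
  have hfar : ∀ v ∈ Set.Icc a b, δ ≤ |v - u| →
      s v - s u - s' u * (v - u) ≤ (B / δ ^ 2) * (v - u) ^ 2 := by
    intro v hv hd
    have h1 : |s v| ≤ C := hC v hv
    have h2 : |s u| ≤ C := hC u ⟨le_of_lt hau, le_of_lt hub⟩
    have h3 : |v - u| ≤ b - a := by
      rw [abs_sub_le_iff]
      constructor <;> [linarith [hv.2]; linarith [hv.1]]
    have hnum : s v - s u - s' u * (v - u) ≤ B := by
      have h4 : |s' u * (v - u)| ≤ |s' u| * (b - a) := by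
        rw [abs_mul]
        exact mul_le_mul_of_nonneg_left h3 (abs_nonneg _)
      have := (abs_le.mp h1).2
      have := (abs_le.mp h2).1
      have := (abs_le.mp h4).1
      nlinarith
    have hsq : δ ^ 2 ≤ (v - u) ^ 2 := by
      have := sq_abs (v - u)
      nlinarith [abs_nonneg (v - u)]
    calc s v - s u - s' u * (v - u) ≤ B := hnum
      _ = (B / δ ^ 2) * δ ^ 2 := by field_simp
      _ ≤ (B / δ ^ 2) * (v - u) ^ 2 := by
          apply mul_le_mul_of_nonneg_left hsq (by positivity)
  refine ⟨max 0 (max M (B / δ ^ 2)), le_max_left _ _, fun γ hγ v hv hvne => ?_⟩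
  have hvu : 0 < (v - u) ^ 2 := by
    have : v - u ≠ 0 := sub_ne_zero.mpr hvne
    positivity
  rcases le_or_gt (|v - u|) δ with h | h
  · have hvI : v ∈ Set.Icc (u - δ) (u + δ) := by
      rw [abs_le] at h
      exact ⟨by linarith [h.1], by linarith [h.2]⟩
    have := hnear v hvI
    have hMγ : M < γ := lt_of_le_of_lt ((le_max_left _ _).trans (le_max_right _ _)) hγ
    nlinarith
  · have := hfar v hv (le_of_lt h)
    have hBγ : B / δ ^ 2 < γ := lt_of_le_of_lt ((le_max_right _ _).trans (le_max_right _ _)) hγ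
    nlinarith
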